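/- Let (ξ_n)_{n∈ℤ} be a stationary Markov chain and f ∈ L²_0(π). Let a < b ≤ c < d be nonnegative integers and set U = ∑_{i=a+1}^{b} X_i and W = ∑_{i=c+1}^{d} X_i. Then |E(U·W)| ≤ ‖E(S_{b−a}|ξ_{b−a})‖ · ‖E(S_{d−c}|ξ_0)‖. -/

import Mathlib

open MeasureTheory ProbabilityTheory Filter
open scoped ENNReal NNReal Topology

noncomputable section

/-- The σ-algebra generated by the random variables `ξ k`, `k ∈ I`. -/
def sigmaOf {Ω S : Type*} [MeasurableSpace S] (ξ : ℤ → Ω → S) (I : Set ℤ) :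
    MeasurableSpace Ω :=
  ⨆ k ∈ I, MeasurableSpace.comap (ξ k) inferInstance

/-- The σ-algebra generated by the pair `(ξ i, ξ j)`. -/
def pairSigma {Ω S : Type*} [MeasurableSpace S] (ξ : ℤ → Ω → S) (i j : ℤ) :
    MeasurableSpace Ω :=
  MeasurableSpace.comap (ξ i) inferInstance ⊔ MeasurableSpace.comap (ξ j) inferInstance

/-- Conditional independence of the σ-algebras `m₁` and `m₂` given `m'`. -/
def CondIndepGiven {Ω : Type*} [MeasurableSpace Ω] (μ : Measure Ω)
    (m' m₁ m₂ : MeasurableSpace Ω) : Prop :=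
  ∀ A B : Set Ω, MeasurableSet[m₁] A → MeasurableSet[m₂] B →
    μ[(A ∩ B).indicator (fun _ => (1 : ℝ)) | m'] =ᵐ[μ]
      fun ω => (μ[A.indicator (fun _ => (1 : ℝ)) | m']) ω *
        (μ[B.indicator (fun _ => (1 : ℝ)) | m']) ω

/-- Markov property: for every `n`, the past `σ(ξ k, k ≤ n)` and the future
`σ(ξ k, k ≥ n)` are conditionally independent given `σ(ξ n)`. -/
def IsMarkovChain {Ω S : Type*} [MeasurableSpace Ω] [MeasurableSpace S]
    (μ : Measure Ω) (ξ : ℤ → Ω → S) : Prop :=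
  ∀ n : ℤ, CondIndepGiven μ (MeasurableSpace.comap (ξ n) inferInstance)
    (sigmaOf ξ {k | k ≤ n}) (sigmaOf ξ {k | n ≤ k})

/-- Stationarity: `(ξ (n+1))_n` has the same law as `(ξ n)_n`. -/
def IsStationaryZ {Ω S : Type*} [MeasurableSpace Ω] [MeasurableSpace S]
    (μ : Measure Ω) (ξ : ℤ → Ω → S) : Prop :=
  Measure.map (fun ω (n : ℤ) => ξ (n + 1) ω) μ = Measure.map (fun ω (n : ℤ) => ξ n ω) μ

/-- The left shift on path space `S^ℤ`. -/
def shiftZ {S : Type*} (x : ℤ → S) : ℤ → S := fun n => x (n + 1)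

/-- Total ergodicity: every iterate of the shift is ergodic for the law of the chain. -/
def TotallyErgodic {Ω S : Type*} [MeasurableSpace Ω] [MeasurableSpace S]
    (μ : Measure Ω) (ξ : ℤ → Ω → S) : Prop :=
  ∀ k : ℕ, 0 < k → Ergodic (shiftZ^[k]) (Measure.map (fun ω (n : ℤ) => ξ n ω) μ)

/-- Partial sums `S_n = f(ξ 1) + ⋯ + f(ξ n)`. -/
def pS {Ω S : Type*} (ξ : ℤ → Ω → S) (f : S → ℝ) (n : ℕ) (ω : Ω) : ℝ :=
  ∑ i ∈ Finset.Icc 1 n, f (ξ (i : ℤ) ω)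

/-- Convergence in distribution (weak convergence of the laws) of real random
variables to the measure `ν`. -/
def TendstoInDistribution {Ω : Type*} [MeasurableSpace Ω] (μ : Measure Ω)
    (Y : ℕ → Ω → ℝ) (ν : Measure ℝ) : Prop :=
  ∀ g : BoundedContinuousFunction ℝ ℝ,
    Tendsto (fun n => ∫ ω, g (Y n ω) ∂μ) atTop (𝓝 (∫ x, g x ∂ν))


namespace Stmt16Aux

set_option linter.unusedSectionVars false

section A
variable {α : Type*} {m m0 : MeasurableSpace α} {μ : Measure α}

/-- The conditional expectation of an `L²` function agrees with `condExpL2`. -/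
lemma condexp_ae_eq_condexpL2' (hm : m ≤ m0) [IsFiniteMeasure μ] {g : α → ℝ}
    (hg : MemLp g 2 μ) :
    μ[g|m] =ᵐ[μ] (condExpL2 ℝ ℝ hm (hg.toLp g) : α →₂[μ] ℝ) := by
  refine (ae_eq_condExp_of_forall_setIntegral_eq hm (hg.integrable one_le_two)
    (fun s _ hμs => integrableOn_condExpL2_of_measure_ne_top hm hμs.ne _)
    (fun s hs hμs => ?_) (aestronglyMeasurable_condExpL2 hm _)).symm
  rw [integral_condExpL2_eq hm (hg.toLp g) hs hμs.ne]
  exact setIntegral_congr_ae (hm s hs) ((hg.coeFn_toLp).mono fun x hx _ => hx)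

lemma memℒp_two_condexp' (hm : m ≤ m0) [IsFiniteMeasure μ] {g : α → ℝ}
    (hg : MemLp g 2 μ) : MemLp (μ[g|m]) 2 μ :=
  MemLp.ae_eq (condexp_ae_eq_condexpL2' hm hg).symm (Lp.memLp _)

lemma eLpNorm_two_condexp_le' (hm : m ≤ m0) [IsFiniteMeasure μ] {g : α → ℝ}
    (hg : MemLp g 2 μ) : eLpNorm (μ[g|m]) 2 μ ≤ eLpNorm g 2 μ := by
  rw [eLpNorm_congr_ae (condexp_ae_eq_condexpL2' hm hg)]
  refine (eLpNorm_condExpL2_le hm _).trans ?_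
  rw [eLpNorm_congr_ae hg.coeFn_toLp]

lemma abs_integral_mul_le_eLpNorm {U W : α → ℝ} (hU : MemLp U 2 μ) (hW : MemLp W 2 μ) :
    |∫ x, U x * W x ∂μ| ≤ (eLpNorm U 2 μ).toReal * (eLpNorm W 2 μ).toReal := by
  have h1 : ∫ x, U x * W x ∂μ = (inner ℝ (hU.toLp U) (hW.toLp W) : ℝ) := by
    rw [L2.inner_def]
    refine integral_congr_ae ?_
    filter_upwards [hU.coeFn_toLp, hW.coeFn_toLp] with x h1 h2
    rw [h1, h2]
    simp [RCLike.inner_apply, mul_comm]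
  rw [h1, ← Lp.norm_toLp U hU, ← Lp.norm_toLp W hW]
  exact abs_real_inner_le_norm _ _

lemma integrable_mul_of_memℒp_two {U W : α → ℝ} (hU : MemLp U 2 μ) (hW : MemLp W 2 μ) :
    Integrable (fun x => U x * W x) μ := by
  have h := L2.integrable_inner (𝕜 := ℝ) (hU.toLp U) (hW.toLp W)
  refine h.congr ?_
  filter_upwards [hU.coeFn_toLp, hW.coeFn_toLp] with x h1 h2
  rw [h1, h2]
  simp [RCLike.inner_apply, mul_comm]

lemma finsetSum_ae_eq {ι : Type*} (s : Finset ι) (F G : ι → α → ℝ)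
    (h : ∀ i ∈ s, F i =ᵐ[μ] G i) : (∑ i ∈ s, F i) =ᵐ[μ] ∑ i ∈ s, G i := by
  classical
  induction s using Finset.induction_on with
  | empty => simp
  | @insert i s his ih =>
    rw [Finset.sum_insert his, Finset.sum_insert his]
    exact (h i (Finset.mem_insert_self i s)).add
      (ih fun j hj => h j (Finset.mem_insert_of_mem hj))


end A

section B
variable {α : Type*} {m' m₁ m₂ : MeasurableSpace α} [m0 : MeasurableSpace α]
variable {μ : Measure α} [IsProbabilityMeasure μ]

lemma condIndepGiven_symm (h : CondIndepGiven μ m' m₁ m₂) : CondIndepGiven μ m' m₂ m₁ := by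
  intro A B hA hB
  have h2 := h B A hB hA
  rw [Set.inter_comm] at h2
  exact h2.trans (Filter.Eventually.of_forall fun ω => mul_comm _ _)

lemma indicator_condexp_eq (h : CondIndepGiven μ m' m₁ m₂) (h1 : m' ≤ m₁) (hm₁ : m₁ ≤ m0)
    (hm₂ : m₂ ≤ m0) {B : Set α} (hB : MeasurableSet[m₂] B) :
    μ[B.indicator (fun _ => (1 : ℝ)) | m₁] =ᵐ[μ] μ[B.indicator (fun _ => (1 : ℝ)) | m'] := by
  have hm' : m' ≤ m0 := h1.trans hm₁
  have hBint : Integrable (B.indicator fun _ => (1:ℝ)) μ :=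
    (integrable_const 1).indicator (hm₂ B hB)
  refine (ae_eq_condExp_of_forall_setIntegral_eq hm₁ hBint
    (fun s _ _ => integrable_condExp.integrableOn) (fun A hA hμA => ?_)
    ((stronglyMeasurable_condExp.mono h1).aestronglyMeasurable)).symm
  have hAm : MeasurableSet A := hm₁ A hA
  have hAint : Integrable (A.indicator fun _ => (1:ℝ)) μ := (integrable_const 1).indicator hAm
  have hABint : Integrable ((A ∩ B).indicator fun _ => (1:ℝ)) μ :=
    (integrable_const 1).indicator (hAm.inter (hm₂ B hB))
  have hprod_int : Integrable
      ((μ[B.indicator (fun _ => (1:ℝ))|m']) * A.indicator (fun _ => (1:ℝ))) μ := by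
    refine Integrable.mono
      (integrable_condExp (f := B.indicator (fun _ => (1:ℝ))) (m := m'))
      (((stronglyMeasurable_condExp.mono hm').mul
        (stronglyMeasurable_const.indicator hAm)).aestronglyMeasurable) ?_
    refine Filter.Eventually.of_forall fun x => ?_
    by_cases hx : x ∈ A
    · simp [Pi.mul_apply, Set.indicator_of_mem hx]
    · simp [Pi.mul_apply, Set.indicator_of_notMem hx]
  have e2 : μ[(μ[B.indicator (fun _ => (1:ℝ))|m']) * A.indicator (fun _ => (1:ℝ)) | m']
      =ᵐ[μ] (μ[B.indicator (fun _ => (1:ℝ))|m']) * μ[A.indicator (fun _ => (1:ℝ))|m'] :=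
    condExp_mul_of_stronglyMeasurable_left stronglyMeasurable_condExp hprod_int hAint
  have e3 := h A B hA hB
  calc ∫ x in A, (μ[B.indicator (fun _ => (1:ℝ))|m']) x ∂μ
      = ∫ x, ((μ[B.indicator (fun _ => (1:ℝ))|m']) * A.indicator (fun _ => (1:ℝ))) x ∂μ := by
        rw [← integral_indicator hAm]
        refine integral_congr_ae (Filter.Eventually.of_forall fun x => ?_)
        by_cases hx : x ∈ A
        · simp [Pi.mul_apply, Set.indicator_of_mem hx]
        · simp [Pi.mul_apply, Set.indicator_of_notMem hx]
    _ = ∫ x, (μ[(μ[B.indicator (fun _ => (1:ℝ))|m']) * A.indicator (fun _ => (1:ℝ)) | m']) x ∂μ :=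
        (integral_condExp hm').symm
    _ = ∫ x, (μ[B.indicator (fun _ => (1:ℝ))|m']) x * (μ[A.indicator (fun _ => (1:ℝ))|m']) x ∂μ :=
        integral_congr_ae (e2.mono fun x hx => by simpa [Pi.mul_apply] using hx)
    _ = ∫ x, (μ[(A ∩ B).indicator (fun _ => (1:ℝ))|m']) x ∂μ := by
        refine integral_congr_ae ?_
        filter_upwards [e3] with x hx
        rw [hx]
        exact mul_comm _ _
    _ = ∫ x, (A ∩ B).indicator (fun _ => (1:ℝ)) x ∂μ := integral_condExp hm'
    _ = ∫ x in A, B.indicator (fun _ => (1:ℝ)) x ∂μ := by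
        rw [integral_indicator (hAm.inter (hm₂ B hB)), setIntegral_indicator (hm₂ B hB)]


set_option maxHeartbeats 1000000 in
lemma condexp_comp_eq_of_condIndep {S : Type*} [MeasurableSpace S]
    (h : CondIndepGiven μ m' m₁ m₂) (h1 : m' ≤ m₁) (hm₁ : m₁ ≤ m0) (hm₂ : m₂ ≤ m0)
    {φ : α → S} (hφ : Measurable φ)
    (hφ₂ : MeasurableSpace.comap φ inferInstance ≤ m₂)
    {g : S → ℝ} (hg : AEStronglyMeasurable g (μ.map φ))
    (hgi : Integrable (fun x => g (φ x)) μ) :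
    μ[(fun x => g (φ x)) | m₁] =ᵐ[μ] μ[(fun x => g (φ x)) | m'] := by
  have hm' : m' ≤ m0 := h1.trans hm₁
  have hφae : AEMeasurable φ μ := hφ.aemeasurable
  have hmp : MeasurePreserving φ μ (μ.map φ) := ⟨hφ, rfl⟩
  have key : ∀ ⦃q : S → ℝ⦄, Integrable q (μ.map φ) → ∀ A : Set α, MeasurableSet[m₁] A →
      ∫ x in A, q (φ x) ∂μ = ∫ x in A, (μ[(fun y => q (φ y))|m']) x ∂μ := by
    refine Integrable.induction (μ := μ.map φ) (P := fun q => ∀ A, MeasurableSet[m₁] A →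
      ∫ x in A, q (φ x) ∂μ = ∫ x in A, (μ[(fun y => q (φ y))|m']) x ∂μ) ?_ ?_ ?_ ?_
    · -- indicator case
      intro cc s hs hνs A hA
      have hBset : MeasurableSet[m₂] (φ ⁻¹' s) := hφ₂ _ ⟨s, hs, rfl⟩
      have hBm0 : MeasurableSet (φ ⁻¹' s) := hm₂ _ hBset
      have hBint : Integrable ((φ ⁻¹' s).indicator fun _ => (1:ℝ)) μ :=
        (integrable_const 1).indicator hBm0
      have hcomp : (fun x => s.indicator (fun _ => cc) (φ x))
          = fun x => cc • ((φ ⁻¹' s).indicator (fun _ => (1:ℝ))) x := by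
        funext x
        by_cases hx : φ x ∈ s
        · simp [Set.indicator_of_mem hx, Set.indicator_of_mem (show x ∈ φ ⁻¹' s from hx)]
        · simp [Set.indicator_of_notMem hx, Set.indicator_of_notMem (show x ∉ φ ⁻¹' s from hx)]
      rw [hcomp]
      have hsm : μ[(fun x => cc • ((φ ⁻¹' s).indicator (fun _ => (1:ℝ))) x)|m'] =ᵐ[μ]
          fun x => cc • (μ[((φ ⁻¹' s).indicator fun _ => (1:ℝ))|m']) x := by
        have := condExp_smul (μ := μ) (m := m') cc ((φ ⁻¹' s).indicator fun _ => (1:ℝ))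
        refine (condExp_congr_ae (Filter.Eventually.of_forall fun x => rfl)).trans
          (this.mono fun x hx => ?_)
        exact hx
      rw [setIntegral_congr_ae (hm₁ A hA) (hsm.mono fun x hx _ => hx)]
      simp only [smul_eq_mul]
      rw [integral_const_mul, integral_const_mul]
      congr 1
      have hrw := setIntegral_congr_ae (μ := μ) (hm₁ A hA)
        (((indicator_condexp_eq h h1 hm₁ hm₂ hBset).symm).mono
          (fun x (hx : (μ[(φ ⁻¹' s).indicator (fun _ => (1:ℝ))|m']) x
              = (μ[(φ ⁻¹' s).indicator (fun _ => (1:ℝ))|m₁]) x) (_ : x ∈ A) => hx))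
      rw [hrw, setIntegral_condExp hm₁ hBint hA]
    · -- additivity
      intro q r hdisj hqi hri hq hr A hA
      have hqφ : Integrable (fun x => q (φ x)) μ :=
        (integrable_map_measure hqi.aestronglyMeasurable hφae).mp hqi
      have hrφ : Integrable (fun x => r (φ x)) μ :=
        (integrable_map_measure hri.aestronglyMeasurable hφae).mp hri
      have hsum : (fun x => (q + r) (φ x)) = fun x => q (φ x) + r (φ x) := rfl
      rw [hsum]
      have hce : μ[(fun x => q (φ x) + r (φ x))|m'] =ᵐ[μ]
          fun x => (μ[(fun y => q (φ y))|m']) x + (μ[(fun y => r (φ y))|m']) x := by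
        refine (condExp_add (m := m') hqφ hrφ).mono fun x hx => ?_
        exact hx
      rw [setIntegral_congr_ae (hm₁ A hA) (hce.mono fun x hx _ => hx),
        integral_add hqφ.integrableOn hrφ.integrableOn,
        integral_add integrable_condExp.integrableOn integrable_condExp.integrableOn,
        hq A hA, hr A hA]
    · -- closedness
      haveI : Fact ((1:ℝ≥0∞) ≤ 1) := ⟨le_rfl⟩
      set C : (S →₁[μ.map φ] ℝ) → (α →₁[μ] ℝ) := fun q => Lp.compMeasurePreserving φ hmp q with hC
      have hCc : Continuous C := (Lp.isometry_compMeasurePreserving (E := ℝ) (p := 1) hmp).continuous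
      have hrepr1 : ∀ (q : S →₁[μ.map φ] ℝ) (A : Set α), MeasurableSet[m₁] A →
          ∫ x in A, (q : S → ℝ) (φ x) ∂μ = ∫ x in A, (C q) x ∂μ := by
        intro q A hA
        refine (setIntegral_congr_ae (hm₁ A hA) ?_).symm
        filter_upwards [Lp.coeFn_compMeasurePreserving q hmp] with x hx _
        exact hx
      have hrepr2 : ∀ (q : S →₁[μ.map φ] ℝ) (A : Set α), MeasurableSet[m₁] A →
          ∫ x in A, (μ[(fun y => (q : S → ℝ) (φ y))|m']) x ∂μ
            = ∫ x in A, (condExpL1CLM ℝ hm' μ (C q)) x ∂μ := by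
        intro q A hA
        refine setIntegral_congr_ae (hm₁ A hA) ?_
        have h2 : condExpL1 hm' μ (fun y => (q : S → ℝ) (φ y)) = condExpL1 hm' μ (C q) :=
          condExpL1_congr_ae hm' (Lp.coeFn_compMeasurePreserving q hmp).symm
        have h3 : condExpL1 hm' μ (C q) = condExpL1CLM ℝ hm' μ (C q) := by
          rw [condExpL1_eq (L1.integrable_coeFn (C q))]
          congr 1
          exact Integrable.toL1_coeFn _ _
        filter_upwards [condExp_ae_eq_condExpL1 hm' (fun y => (q : S → ℝ) (φ y))] with x hx _
        rw [hx, h2, h3]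
      have hset : {q : S →₁[μ.map φ] ℝ | ∀ A, MeasurableSet[m₁] A →
            ∫ x in A, (q : S → ℝ) (φ x) ∂μ
              = ∫ x in A, (μ[(fun y => (q : S → ℝ) (φ y))|m']) x ∂μ}
          = ⋂ (A : Set α) (_ : MeasurableSet[m₁] A),
            {q : S →₁[μ.map φ] ℝ | ∫ x in A, (C q) x ∂μ
              = ∫ x in A, (condExpL1CLM ℝ hm' μ (C q)) x ∂μ} := by
        ext q
        simp only [Set.mem_setOf_eq, Set.mem_iInter]
        constructor
        · intro hq A hA
          rw [← hrepr1 q A hA, ← hrepr2 q A hA]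
          exact hq A hA
        · intro hq A hA
          rw [hrepr1 q A hA, hrepr2 q A hA]
          exact hq A hA
      rw [show {q : S →₁[μ.map φ] ℝ | ∀ A, MeasurableSet[m₁] A →
            ∫ x in A, (q : S → ℝ) (φ x) ∂μ
              = ∫ x in A, (μ[(fun y => (q : S → ℝ) (φ y))|m']) x ∂μ}
          = _ from hset]
      refine isClosed_iInter fun A => isClosed_iInter fun hA => isClosed_eq ?_ ?_
      · exact (continuous_setIntegral A).comp hCc
      · exact (continuous_setIntegral A).comp ((condExpL1CLM ℝ hm' μ).continuous.comp hCc)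
    · -- a.e. congruence
      intro q r hqr hqi hq A hA
      have hφeq : (fun x => q (φ x)) =ᵐ[μ] fun x => r (φ x) := ae_eq_comp hφae hqr
      rw [← setIntegral_congr_ae (hm₁ A hA) (hφeq.mono fun x hx _ => hx),
        ← setIntegral_congr_ae (hm₁ A hA) ((condExp_congr_ae hφeq).mono fun x hx _ => hx)]
      exact hq A hA
  have hgν : Integrable g (μ.map φ) := (integrable_map_measure hg hφae).mpr hgi
  refine (ae_eq_condExp_of_forall_setIntegral_eq hm₁ hgi
    (fun s _ _ => integrable_condExp.integrableOn)
    (fun s hs _ => (key hgν s hs).symm)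
    ((stronglyMeasurable_condExp.mono h1).aestronglyMeasurable)).symm


/-- conditional expectation of a finite sum is unchanged when m₁ is replaced by m',
    assuming each term is. -/
lemma condexp_sum_eq {s : Finset ℕ} {F : ℕ → α → ℝ}
    (hInt : ∀ i ∈ s, Integrable (F i) μ)
    (hterm : ∀ i ∈ s, μ[F i|m₁] =ᵐ[μ] μ[F i|m']) :
    μ[(fun x => ∑ i ∈ s, F i x)|m₁] =ᵐ[μ] μ[(fun x => ∑ i ∈ s, F i x)|m'] := by
  have h1 : (fun x => ∑ i ∈ s, F i x) = ∑ i ∈ s, F i := by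
    funext x; simp
  rw [h1]
  calc μ[∑ i ∈ s, F i|m₁] =ᵐ[μ] ∑ i ∈ s, μ[F i|m₁] := condExp_finsetSum hInt m₁
    _ =ᵐ[μ] ∑ i ∈ s, μ[F i|m'] := finsetSum_ae_eq s _ _ hterm
    _ =ᵐ[μ] μ[∑ i ∈ s, F i|m'] := (condExp_finsetSum hInt m').symm


end B

section C
variable {α β S : Type*} [mα : MeasurableSpace α] [mβ : MeasurableSpace β] [mS : MeasurableSpace S]

lemma condexp_comp_measurePreserving {μ : Measure α} [IsProbabilityMeasure μ]
    {τ : α → β} (hτ : Measurable τ)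
    {ψ : β → S} (hψ : Measurable ψ) {h : β → ℝ} (hh : AEStronglyMeasurable h (μ.map τ))
    (hint : Integrable (fun x => h (τ x)) μ) :
    μ[(fun x => h (τ x)) | MeasurableSpace.comap (fun x => ψ (τ x)) inferInstance]
      =ᵐ[μ] fun x => ((μ.map τ)[h | MeasurableSpace.comap ψ inferInstance]) (τ x) := by
  have hτae : AEMeasurable τ μ := hτ.aemeasurable
  haveI : IsProbabilityMeasure (μ.map τ) := Measure.isProbabilityMeasure_map hτae
  have hhi : Integrable h (μ.map τ) := (integrable_map_measure hh hτae).mpr hint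
  set g : β → ℝ := (μ.map τ)[h | MeasurableSpace.comap ψ mS] with hgdef
  have hψle : MeasurableSpace.comap ψ mS ≤ mβ := hψ.comap_le
  have hgsm : StronglyMeasurable[MeasurableSpace.comap ψ mS] g := stronglyMeasurable_condExp
  have hgi : Integrable g (μ.map τ) := integrable_condExp
  have hgae : AEStronglyMeasurable g (μ.map τ) := (hgsm.mono hψle).aestronglyMeasurable
  have hm : MeasurableSpace.comap (fun x => ψ (τ x)) mS ≤ mα :=
    (hψ.comp hτ).comap_le
  have hcc : MeasurableSpace.comap (fun x => ψ (τ x)) mS = (MeasurableSpace.comap ψ mS).comap τ :=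
    (MeasurableSpace.comap_comp (f := ψ) (g := τ)).symm
  have hτm : @Measurable α β ((MeasurableSpace.comap ψ mS).comap τ) (MeasurableSpace.comap ψ mS) τ :=
    Measurable.of_comap_le le_rfl
  refine (ae_eq_condExp_of_forall_setIntegral_eq hm hint
    (fun s _ _ => ((integrable_map_measure hgae hτae).mp hgi).integrableOn)
    (fun s hs _ => ?_) ?_).symm
  · rw [hcc] at hs
    obtain ⟨t, ht, rfl⟩ := hs
    have htm0 : MeasurableSet t := hψle t ht
    show ∫ x in τ ⁻¹' t, g (τ x) ∂μ = ∫ x in τ ⁻¹' t, h (τ x) ∂μ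
    rw [← setIntegral_map htm0 hgae hτae, ← setIntegral_map htm0 hh hτae]
    exact setIntegral_condExp hψle hhi ht
  · refine AEStronglyMeasurable.congr ?_ (Filter.EventuallyEq.refl _ _)
    rw [hcc]
    exact (hgsm.comp_measurable hτm).aestronglyMeasurable

lemma eLpNorm_condexp_comp_measurePreserving {μ : Measure α} [IsProbabilityMeasure μ]
    {τ : α → β} (hτ : Measurable τ)
    {ψ : β → S} (hψ : Measurable ψ) {h : β → ℝ} (hh : AEStronglyMeasurable h (μ.map τ))
    (hint : Integrable (fun x => h (τ x)) μ) :
    eLpNorm (μ[(fun x => h (τ x)) | MeasurableSpace.comap (fun x => ψ (τ x)) inferInstance]) 2 μ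
      = eLpNorm ((μ.map τ)[h | MeasurableSpace.comap ψ inferInstance]) 2 (μ.map τ) := by
  rw [eLpNorm_congr_ae (condexp_comp_measurePreserving hτ hψ hh hint)]
  exact (eLpNorm_map_measure
    ((stronglyMeasurable_condExp.mono hψ.comap_le).aestronglyMeasurable) hτ.aemeasurable).symm


end C

end Stmt16Aux

open Stmt16Aux

set_option maxHeartbeats 2000000 in
theorem stmt16 {Ω S : Type*} [MeasurableSpace Ω] [MeasurableSpace S]
    (μ : Measure Ω) [IsProbabilityMeasure μ] (ξ : ℤ → Ω → S)
    (hmeas : ∀ n, Measurable (ξ n))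
    (hstat : IsStationaryZ μ ξ) (hmarkov : IsMarkovChain μ ξ)
    (f : S → ℝ) (hf : Measurable f)
    (hmean : ∫ ω, f (ξ 0 ω) ∂μ = 0)
    (hL2 : MemLp (fun ω => f (ξ 0 ω)) 2 μ)
    (a b c d : ℕ) (hab : a < b) (hbc : b ≤ c) (hcd : c < d) :
    |∫ ω, (∑ i ∈ Finset.Icc (a + 1) b, f (ξ (i : ℤ) ω)) *
        (∑ i ∈ Finset.Icc (c + 1) d, f (ξ (i : ℤ) ω)) ∂μ| ≤
      (eLpNorm (μ[pS ξ f (b - a) |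
          MeasurableSpace.comap (ξ ((b : ℤ) - (a : ℤ))) inferInstance]) 2 μ).toReal *
        (eLpNorm (μ[pS ξ f (d - c) |
          MeasurableSpace.comap (ξ 0) inferInstance]) 2 μ).toReal := by
  classical
  -- notation
  let mΩ : MeasurableSpace Ω := inferInstance
  let mk : ℤ → MeasurableSpace Ω := fun n => MeasurableSpace.comap (ξ n) inferInstance
  have hmk_le : ∀ n, mk n ≤ mΩ := fun n => (hmeas n).comap_le
  have hpast_le : ∀ n : ℤ, sigmaOf ξ {k | k ≤ n} ≤ mΩ := fun n =>
    iSup₂_le fun k _ => hmk_le k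
  have hfut_le : ∀ n : ℤ, sigmaOf ξ {k | n ≤ k} ≤ mΩ := fun n =>
    iSup₂_le fun k _ => hmk_le k
  have hmk_past : ∀ {i n : ℤ}, i ≤ n → mk i ≤ sigmaOf ξ {k | k ≤ n} := by
    intro i n hi
    exact le_iSup₂ (f := fun k (_ : k ∈ {k : ℤ | k ≤ n}) =>
      MeasurableSpace.comap (ξ k) inferInstance) i hi
  have hmk_fut : ∀ {i n : ℤ}, n ≤ i → mk i ≤ sigmaOf ξ {k | n ≤ k} := by
    intro i n hi
    exact le_iSup₂ (f := fun k (_ : k ∈ {k : ℤ | n ≤ k}) =>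
      MeasurableSpace.comap (ξ k) inferInstance) i hi
  -- stationarity: identical one-dimensional marginals
  have hT : Measurable (fun ω (n : ℤ) => ξ n ω) := measurable_pi_lambda _ hmeas
  have hstep : ∀ n : ℤ, μ.map (ξ (n + 1)) = μ.map (ξ n) := by
    intro n
    have h1 : Measurable (fun ω (k : ℤ) => ξ (k + 1) ω) :=
      measurable_pi_lambda _ (fun k => hmeas (k + 1))
    have e1 := congrArg (fun m : Measure (ℤ → S) => m.map (fun x => x n)) hstat
    rw [Measure.map_map (measurable_pi_apply n) h1,
      Measure.map_map (measurable_pi_apply n) hT] at e1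
    exact e1
  have hmarg : ∀ n : ℤ, μ.map (ξ n) = μ.map (ξ 0) := by
    intro n
    induction n using Int.induction_on with
    | zero => rfl
    | succ k ih => rw [hstep k, ih]
    | pred k ih =>
      have h2 := hstep (-(k : ℤ) - 1)
      have e : (-(k : ℤ) - 1 + 1) = -(k : ℤ) := by ring
      rw [e] at h2
      exact h2.symm.trans ih
  have hL2n : ∀ n : ℤ, MemLp (fun ω => f (ξ n ω)) 2 μ := by
    intro n
    have h0 : MemLp f 2 (μ.map (ξ 0)) :=
      (memLp_map_measure_iff hf.aestronglyMeasurable (hmeas 0).aemeasurable).mpr hL2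
    have hn : MemLp f 2 (μ.map (ξ n)) := by rw [hmarg n]; exact h0
    exact (memLp_map_measure_iff hf.aestronglyMeasurable (hmeas n).aemeasurable).mp hn
  have hInt : ∀ n : ℤ, Integrable (fun ω => f (ξ n ω)) μ :=
    fun n => (hL2n n).integrable one_le_two
  -- the random variables U, W
  set U : Ω → ℝ := fun ω => ∑ i ∈ Finset.Icc (a + 1) b, f (ξ (i : ℤ) ω) with hUdef
  set W : Ω → ℝ := fun ω => ∑ i ∈ Finset.Icc (c + 1) d, f (ξ (i : ℤ) ω) with hWdef
  have hU2 : MemLp U 2 μ := memLp_finsetSum _ (fun i _ => hL2n i)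
  have hW2 : MemLp W 2 μ := memLp_finsetSum _ (fun i _ => hL2n i)
  have hUint : Integrable U μ := hU2.integrable one_le_two
  have hWint : Integrable W μ := hW2.integrable one_le_two
  -- Markov property consequences
  have hUcond : μ[U | sigmaOf ξ {k | (b : ℤ) ≤ k}] =ᵐ[μ] μ[U | mk (b : ℤ)] := by
    refine condexp_sum_eq (fun i _ => hInt i) (fun i hi => ?_)
    have hib : (i : ℤ) ≤ (b : ℤ) := by
      have := (Finset.mem_Icc.mp hi).2
      exact_mod_cast this
    exact condexp_comp_eq_of_condIndep (condIndepGiven_symm (hmarkov (b : ℤ)))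
      (hmk_fut le_rfl) (hfut_le (b : ℤ)) (hpast_le (b : ℤ)) (hmeas (i : ℤ))
      (hmk_past hib) hf.aestronglyMeasurable (hInt (i : ℤ))
  have hWcond : μ[W | sigmaOf ξ {k | k ≤ (c : ℤ)}] =ᵐ[μ] μ[W | mk (c : ℤ)] := by
    refine condexp_sum_eq (fun i _ => hInt i) (fun i hi => ?_)
    have hic : (c : ℤ) ≤ (i : ℤ) := by
      have := (Finset.mem_Icc.mp hi).1
      have h2 : c + 1 ≤ i := this
      exact_mod_cast Nat.le_of_succ_le h2
    exact condexp_comp_eq_of_condIndep (hmarkov (c : ℤ))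
      (hmk_past le_rfl) (hpast_le (c : ℤ)) (hfut_le (c : ℤ)) (hmeas (i : ℤ))
      (hmk_fut hic) hf.aestronglyMeasurable (hInt (i : ℤ))
  -- measurability of U w.r.t. the past of c
  have hUsm : StronglyMeasurable[sigmaOf ξ {k | k ≤ (c : ℤ)}] U := by
    refine Measurable.stronglyMeasurable ?_
    refine Finset.measurable_sum _ (fun i hi => ?_)
    have h1 : @Measurable Ω ℝ (mk (i : ℤ)) _ (fun ω => f (ξ (i : ℤ) ω)) :=
      fun t ht => ⟨f ⁻¹' t, hf ht, rfl⟩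
    have hic : (i : ℤ) ≤ (c : ℤ) := by
      have := (Finset.mem_Icc.mp hi).2
      exact_mod_cast le_trans this hbc
    exact h1.mono (hmk_past hic) le_rfl
  have hWc2 : MemLp (μ[W|mk (c : ℤ)]) 2 μ := memℒp_two_condexp' (hmk_le (c : ℤ)) hW2
  have hUc2 : MemLp (μ[U|mk (c : ℤ)]) 2 μ := memℒp_two_condexp' (hmk_le (c : ℤ)) hU2
  have hUb2 : MemLp (μ[U|mk (b : ℤ)]) 2 μ := memℒp_two_condexp' (hmk_le (b : ℤ)) hU2
  -- Step 1: ∫ U W = ∫ E[U|ξ_c] E[W|ξ_c]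
  have step1 : ∫ ω, U ω * W ω ∂μ = ∫ ω, (μ[U|mk (c : ℤ)]) ω * (μ[W|mk (c : ℤ)]) ω ∂μ := by
    have hUW_int : Integrable (fun ω => U ω * W ω) μ := integrable_mul_of_memℒp_two hU2 hW2
    have e2 : μ[U * W|sigmaOf ξ {k | k ≤ (c : ℤ)}] =ᵐ[μ]
        U * μ[W|sigmaOf ξ {k | k ≤ (c : ℤ)}] :=
      condExp_mul_of_stronglyMeasurable_left hUsm hUW_int hWint
    have e4 : μ[(μ[W|mk (c : ℤ)]) * U | mk (c : ℤ)] =ᵐ[μ]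
        (μ[W|mk (c : ℤ)]) * μ[U|mk (c : ℤ)] :=
      condExp_mul_of_stronglyMeasurable_left stronglyMeasurable_condExp
        (integrable_mul_of_memℒp_two hWc2 hU2) hUint
    calc ∫ ω, U ω * W ω ∂μ
        = ∫ ω, (μ[U * W|sigmaOf ξ {k | k ≤ (c : ℤ)}]) ω ∂μ :=
          (integral_condExp (hpast_le (c : ℤ))).symm
      _ = ∫ ω, U ω * (μ[W|sigmaOf ξ {k | k ≤ (c : ℤ)}]) ω ∂μ := by
          refine integral_congr_ae (e2.mono fun ω hω => ?_)
          simpa using hω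
      _ = ∫ ω, U ω * (μ[W|mk (c : ℤ)]) ω ∂μ := by
          refine integral_congr_ae (hWcond.mono fun ω hω => ?_)
          show U ω * (μ[W|sigmaOf ξ {k | k ≤ (c : ℤ)}]) ω = U ω * (μ[W|mk (c : ℤ)]) ω
          rw [hω]
      _ = ∫ ω, ((μ[W|mk (c : ℤ)]) * U) ω ∂μ := by
          refine integral_congr_ae (Filter.Eventually.of_forall fun ω => ?_)
          simp [mul_comm]
      _ = ∫ ω, (μ[(μ[W|mk (c : ℤ)]) * U | mk (c : ℤ)]) ω ∂μ :=
          (integral_condExp (hmk_le (c : ℤ))).symm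
      _ = ∫ ω, (μ[U|mk (c : ℤ)]) ω * (μ[W|mk (c : ℤ)]) ω ∂μ := by
          refine integral_congr_ae (e4.mono fun ω hω => ?_)
          simp only [Pi.mul_apply] at hω
          rw [hω, mul_comm]
  -- Step 3: contraction to time b
  have step3 : eLpNorm (μ[U|mk (c : ℤ)]) 2 μ ≤ eLpNorm (μ[U|mk (b : ℤ)]) 2 μ := by
    have hmkc_fut : mk (c : ℤ) ≤ sigmaOf ξ {k | (b : ℤ) ≤ k} := hmk_fut (by exact_mod_cast hbc)
    have t1 : μ[U|mk (c : ℤ)] =ᵐ[μ] μ[μ[U|sigmaOf ξ {k | (b : ℤ) ≤ k}]|mk (c : ℤ)] :=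
      (condExp_condExp_of_le hmkc_fut (hfut_le (b : ℤ))).symm
    have t2 : μ[μ[U|sigmaOf ξ {k | (b : ℤ) ≤ k}]|mk (c : ℤ)] =ᵐ[μ]
        μ[μ[U|mk (b : ℤ)]|mk (c : ℤ)] := condExp_congr_ae hUcond
    calc eLpNorm (μ[U|mk (c : ℤ)]) 2 μ
        = eLpNorm (μ[μ[U|mk (b : ℤ)]|mk (c : ℤ)]) 2 μ := eLpNorm_congr_ae (t1.trans t2)
      _ ≤ eLpNorm (μ[U|mk (b : ℤ)]) 2 μ := eLpNorm_two_condexp_le' (hmk_le (c : ℤ)) hUb2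
  -- stationarity transfer
  haveI : IsProbabilityMeasure (μ.map (fun ω (n : ℤ) => ξ n ω)) :=
    Measure.isProbabilityMeasure_map hT.aemeasurable
  have hshift_meas : Measurable (shiftZ (S := S)) :=
    measurable_pi_lambda _ (fun n => measurable_pi_apply (n + 1))
  have hshift1 : (μ.map (fun ω (n : ℤ) => ξ n ω)).map shiftZ = μ.map (fun ω (n : ℤ) => ξ n ω) := by
    rw [Measure.map_map hshift_meas hT]
    exact hstat
  have hshiftk : ∀ k : ℕ, (μ.map (fun ω (n : ℤ) => ξ n ω)).map (shiftZ^[k])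
      = μ.map (fun ω (n : ℤ) => ξ n ω) := by
    intro k
    induction k with
    | zero => simp [Measure.map_id]
    | succ k ih =>
      rw [Function.iterate_succ, ← Measure.map_map (hshift_meas.iterate k) hshift_meas,
        hshift1, ih]
  have hshift_apply : ∀ (k : ℕ) (x : ℤ → S) (n : ℤ), shiftZ^[k] x n = x (n + k) := by
    intro k
    induction k with
    | zero => intro x n; simp
    | succ k ih =>
      intro x n
      rw [Function.iterate_succ_apply, ih (shiftZ x) n]
      show x (n + k + 1) = x (n + (k + 1 : ℕ))
      congr 1
      push_cast
      ring
  -- generic transfer to path space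
  have htrans : ∀ (s : Finset ℕ) (n : ℤ),
      eLpNorm (μ[(fun ω => ∑ i ∈ s, f (ξ (i : ℤ) ω)) |
          MeasurableSpace.comap (ξ n) inferInstance]) 2 μ
        = eLpNorm ((μ.map (fun ω (n : ℤ) => ξ n ω))[(fun x : ℤ → S => ∑ i ∈ s, f (x (i : ℤ))) |
            MeasurableSpace.comap (fun x : ℤ → S => x n) inferInstance]) 2
            (μ.map (fun ω (n : ℤ) => ξ n ω)) := by
    intro s n
    have hFmeas : Measurable (fun x : ℤ → S => ∑ i ∈ s, f (x (i : ℤ))) :=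
      Finset.measurable_sum _ (fun i _ => hf.comp (measurable_pi_apply _))
    have hFint : Integrable (fun ω => ∑ i ∈ s, f (ξ (i : ℤ) ω)) μ :=
      integrable_finset_sum _ (fun i _ => hInt i)
    exact eLpNorm_condexp_comp_measurePreserving (τ := fun ω (n : ℤ) => ξ n ω)
      (ψ := fun x : ℤ → S => x n) (h := fun x : ℤ → S => ∑ i ∈ s, f (x (i : ℤ)))
      hT (measurable_pi_apply n) hFmeas.aestronglyMeasurable hFint
  -- shift transfer on path space
  have hshift_trans : ∀ (a' b' : ℕ), a' < b' →
      eLpNorm ((μ.map (fun ω (n : ℤ) => ξ n ω))[(fun x : ℤ → S =>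
          ∑ i ∈ Finset.Icc (a' + 1) b', f (x (i : ℤ))) |
          MeasurableSpace.comap (fun x : ℤ → S => x (b' : ℤ)) inferInstance]) 2
          (μ.map (fun ω (n : ℤ) => ξ n ω))
        = eLpNorm ((μ.map (fun ω (n : ℤ) => ξ n ω))[(fun x : ℤ → S =>
            ∑ i ∈ Finset.Icc 1 (b' - a'), f (x (i : ℤ))) |
            MeasurableSpace.comap (fun x : ℤ → S => x ((b' - a' : ℕ) : ℤ)) inferInstance]) 2
            (μ.map (fun ω (n : ℤ) => ξ n ω)) := by
    intro a' b' hab'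
    have hGmeas : Measurable (fun x : ℤ → S => ∑ i ∈ Finset.Icc 1 (b' - a'), f (x (i : ℤ))) :=
      Finset.measurable_sum _ (fun i _ => hf.comp (measurable_pi_apply _))
    have hcomp1 : (fun x : ℤ → S =>
        ∑ i ∈ Finset.Icc 1 (b' - a'), f ((shiftZ^[a'] x) (i : ℤ)))
        = fun x : ℤ → S => ∑ i ∈ Finset.Icc (a' + 1) b', f (x (i : ℤ)) := by
      funext x
      simp only [hshift_apply]
      have hIcc : Finset.Icc (a' + 1) b'
          = (Finset.Icc 1 (b' - a')).map (addRightEmbedding a') := by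
        rw [Finset.map_add_right_Icc]
        congr 1
        · omega
        · omega
      rw [hIcc, Finset.sum_map]
      refine Finset.sum_congr rfl fun i hi => ?_
      congr 1
    have hcomp2 : (fun x : ℤ → S => (shiftZ^[a'] x) ((b' - a' : ℕ) : ℤ))
        = fun x : ℤ → S => x (b' : ℤ) := by
      funext x
      rw [hshift_apply]
      congr 1
      omega
    have hFν : Integrable (fun x : ℤ → S => ∑ i ∈ Finset.Icc (a' + 1) b', f (x (i : ℤ)))
        (μ.map (fun ω (n : ℤ) => ξ n ω)) := by
      refine (integrable_map_measure ?_ hT.aemeasurable).mpr ?_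
      · exact (Finset.measurable_sum _
          (fun i _ => hf.comp (measurable_pi_apply _))).aestronglyMeasurable
      · exact integrable_finset_sum _ (fun i _ => hInt i)
    have hGcompint : Integrable (fun x : ℤ → S =>
        ∑ i ∈ Finset.Icc 1 (b' - a'), f ((shiftZ^[a'] x) (i : ℤ)))
        (μ.map (fun ω (n : ℤ) => ξ n ω)) := by
      rw [hcomp1]; exact hFν
    have key := eLpNorm_condexp_comp_measurePreserving (μ := μ.map (fun ω (n : ℤ) => ξ n ω))
      (hshift_meas.iterate a') (measurable_pi_apply ((b' - a' : ℕ) : ℤ))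
      (h := fun x : ℤ → S => ∑ i ∈ Finset.Icc 1 (b' - a'), f (x (i : ℤ)))
      (by rw [hshiftk a']; exact hGmeas.aestronglyMeasurable) hGcompint
    rw [hcomp1, hcomp2, hshiftk a'] at key
    exact key
  -- assemble stationarity for U and W
  have step4 : eLpNorm (μ[U|mk (b : ℤ)]) 2 μ
      = eLpNorm (μ[pS ξ f (b - a) | mk ((b : ℤ) - (a : ℤ))]) 2 μ := by
    have hcast : ((b - a : ℕ) : ℤ) = (b : ℤ) - (a : ℤ) := by omega
    calc eLpNorm (μ[U|mk (b : ℤ)]) 2 μ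
        = eLpNorm ((μ.map (fun ω (n : ℤ) => ξ n ω))[(fun x : ℤ → S =>
            ∑ i ∈ Finset.Icc (a + 1) b, f (x (i : ℤ))) |
            MeasurableSpace.comap (fun x : ℤ → S => x (b : ℤ)) inferInstance]) 2
            (μ.map (fun ω (n : ℤ) => ξ n ω)) := htrans (Finset.Icc (a + 1) b) (b : ℤ)
      _ = eLpNorm ((μ.map (fun ω (n : ℤ) => ξ n ω))[(fun x : ℤ → S =>
            ∑ i ∈ Finset.Icc 1 (b - a), f (x (i : ℤ))) |
            MeasurableSpace.comap (fun x : ℤ → S => x ((b - a : ℕ) : ℤ)) inferInstance]) 2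
            (μ.map (fun ω (n : ℤ) => ξ n ω)) := hshift_trans a b hab
      _ = eLpNorm (μ[pS ξ f (b - a) | mk ((b - a : ℕ) : ℤ)]) 2 μ :=
          (htrans (Finset.Icc 1 (b - a)) ((b - a : ℕ) : ℤ)).symm
      _ = eLpNorm (μ[pS ξ f (b - a) | mk ((b : ℤ) - (a : ℤ))]) 2 μ := by rw [hcast]
  have step5 : eLpNorm (μ[W|mk (c : ℤ)]) 2 μ
      = eLpNorm (μ[pS ξ f (d - c) | mk (0 : ℤ)]) 2 μ := by
    have hcast : ((d - c : ℕ) : ℤ) = (d : ℤ) - (c : ℤ) := by omega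
    have hshift_trans2 :
        eLpNorm ((μ.map (fun ω (n : ℤ) => ξ n ω))[(fun x : ℤ → S =>
            ∑ i ∈ Finset.Icc (c + 1) d, f (x (i : ℤ))) |
            MeasurableSpace.comap (fun x : ℤ → S => x (c : ℤ)) inferInstance]) 2
            (μ.map (fun ω (n : ℤ) => ξ n ω))
          = eLpNorm ((μ.map (fun ω (n : ℤ) => ξ n ω))[(fun x : ℤ → S =>
              ∑ i ∈ Finset.Icc 1 (d - c), f (x (i : ℤ))) |
              MeasurableSpace.comap (fun x : ℤ → S => x (0 : ℤ)) inferInstance]) 2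
              (μ.map (fun ω (n : ℤ) => ξ n ω)) := by
      have hGmeas : Measurable (fun x : ℤ → S => ∑ i ∈ Finset.Icc 1 (d - c), f (x (i : ℤ))) :=
        Finset.measurable_sum _ (fun i _ => hf.comp (measurable_pi_apply _))
      have hcomp1 : (fun x : ℤ → S =>
          ∑ i ∈ Finset.Icc 1 (d - c), f ((shiftZ^[c] x) (i : ℤ)))
          = fun x : ℤ → S => ∑ i ∈ Finset.Icc (c + 1) d, f (x (i : ℤ)) := by
        funext x
        simp only [hshift_apply]
        have hIcc : Finset.Icc (c + 1) d
            = (Finset.Icc 1 (d - c)).map (addRightEmbedding c) := by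
          rw [Finset.map_add_right_Icc]
          congr 1
          · omega
          · omega
        rw [hIcc, Finset.sum_map]
        refine Finset.sum_congr rfl fun i hi => ?_
        congr 1
      have hcomp2 : (fun x : ℤ → S => (shiftZ^[c] x) (0 : ℤ))
          = fun x : ℤ → S => x (c : ℤ) := by
        funext x
        rw [hshift_apply]
        congr 1
        omega
      have hFν : Integrable (fun x : ℤ → S => ∑ i ∈ Finset.Icc (c + 1) d, f (x (i : ℤ)))
          (μ.map (fun ω (n : ℤ) => ξ n ω)) := by
        refine (integrable_map_measure ?_ hT.aemeasurable).mpr ?_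
        · exact (Finset.measurable_sum _
            (fun i _ => hf.comp (measurable_pi_apply _))).aestronglyMeasurable
        · exact integrable_finset_sum _ (fun i _ => hInt i)
      have hGcompint : Integrable (fun x : ℤ → S =>
          ∑ i ∈ Finset.Icc 1 (d - c), f ((shiftZ^[c] x) (i : ℤ)))
          (μ.map (fun ω (n : ℤ) => ξ n ω)) := by
        rw [hcomp1]; exact hFν
      have key := eLpNorm_condexp_comp_measurePreserving (μ := μ.map (fun ω (n : ℤ) => ξ n ω))
        (hshift_meas.iterate c) (measurable_pi_apply (0 : ℤ))
        (h := fun x : ℤ → S => ∑ i ∈ Finset.Icc 1 (d - c), f (x (i : ℤ)))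
        (by rw [hshiftk c]; exact hGmeas.aestronglyMeasurable) hGcompint
      rw [hcomp1, hcomp2, hshiftk c] at key
      exact key
    calc eLpNorm (μ[W|mk (c : ℤ)]) 2 μ
        = eLpNorm ((μ.map (fun ω (n : ℤ) => ξ n ω))[(fun x : ℤ → S =>
            ∑ i ∈ Finset.Icc (c + 1) d, f (x (i : ℤ))) |
            MeasurableSpace.comap (fun x : ℤ → S => x (c : ℤ)) inferInstance]) 2
            (μ.map (fun ω (n : ℤ) => ξ n ω)) := htrans (Finset.Icc (c + 1) d) (c : ℤ)
      _ = eLpNorm ((μ.map (fun ω (n : ℤ) => ξ n ω))[(fun x : ℤ → S =>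
            ∑ i ∈ Finset.Icc 1 (d - c), f (x (i : ℤ))) |
            MeasurableSpace.comap (fun x : ℤ → S => x (0 : ℤ)) inferInstance]) 2
            (μ.map (fun ω (n : ℤ) => ξ n ω)) := hshift_trans2
      _ = eLpNorm (μ[pS ξ f (d - c) | mk (0 : ℤ)]) 2 μ :=
          (htrans (Finset.Icc 1 (d - c)) (0 : ℤ)).symm
  -- finish
  have hCS := abs_integral_mul_le_eLpNorm hUc2 hWc2
  rw [step1] at *
  calc |∫ ω, (μ[U|mk (c : ℤ)]) ω * (μ[W|mk (c : ℤ)]) ω ∂μ|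
      ≤ (eLpNorm (μ[U|mk (c : ℤ)]) 2 μ).toReal * (eLpNorm (μ[W|mk (c : ℤ)]) 2 μ).toReal := hCS
    _ ≤ (eLpNorm (μ[U|mk (b : ℤ)]) 2 μ).toReal * (eLpNorm (μ[W|mk (c : ℤ)]) 2 μ).toReal := by
        refine mul_le_mul_of_nonneg_right ?_ ENNReal.toReal_nonneg
        exact ENNReal.toReal_mono hUb2.eLpNorm_ne_top step3
    _ = _ := by rw [step4, step5]



end
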